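/- If E is a unital trace-preserving completely positive map on operators of a finite-dimensional Hilbert space, then the von Neumann entropy does not decrease: S(E(ρ)) ≥ S(ρ) for every density operator ρ. -/

import Mathlib

open Matrix ComplexOrder

/-- `id_n ⊗ Φ`. -/
noncomputable def applyBlocks {d : ℕ} (n : ℕ)
    (Φ : Matrix (Fin d) (Fin d) ℂ →ₗ[ℂ] Matrix (Fin d) (Fin d) ℂ)
    (M : Matrix (Fin n × Fin d) (Fin n × Fin d) ℂ) :
    Matrix (Fin n × Fin d) (Fin n × Fin d) ℂ :=
  Matrix.of fun p q => Φ (Matrix.of fun i j => M (p.1, i) (q.1, j)) p.2 q.2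

/-- Complete positivity. -/
def IsCP {d : ℕ}
    (Φ : Matrix (Fin d) (Fin d) ℂ →ₗ[ℂ] Matrix (Fin d) (Fin d) ℂ) : Prop :=
  ∀ (n : ℕ) (M : Matrix (Fin n × Fin d) (Fin n × Fin d) ℂ),
    M.PosSemidef → (applyBlocks n Φ M).PosSemidef

/-- The von Neumann entropy `S(ρ) = −Tr(ρ ln ρ) = −Σ_i λ_i ln λ_i`
    (junk value `0` on non-Hermitian matrices). -/
noncomputable def vnEntropy {d : ℕ} (ρ : Matrix (Fin d) (Fin d) ℂ) : ℝ :=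
  if h : ρ.IsHermitian then -∑ i, (h.eigenvalues i) * Real.log (h.eigenvalues i)
  else 0

lemma cp_posSemidef {d : ℕ}
    {E : Matrix (Fin d) (Fin d) ℂ →ₗ[ℂ] Matrix (Fin d) (Fin d) ℂ}
    (hCP : IsCP E) {P : Matrix (Fin d) (Fin d) ℂ} (hP : P.PosSemidef) :
    (E P).PosSemidef := by
  set M : Matrix (Fin 1 × Fin d) (Fin 1 × Fin d) ℂ :=
    Matrix.of (fun p q => P p.2 q.2) with hMdef
  have hM : M.PosSemidef := by
    refine posSemidef_iff_dotProduct_mulVec.mpr ⟨?_, ?_⟩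
    · ext p q
      simp only [hMdef, conjTranspose_apply, of_apply]
      exact hP.1.apply p.2 q.2
    · intro x
      have := hP.dotProduct_mulVec_nonneg (fun j => x (0, j))
      convert this using 1
      simp only [dotProduct, Matrix.mulVec, Fintype.sum_prod_type, Fin.sum_univ_one,
        hMdef, of_apply, Pi.star_apply]
  have key := hCP 1 M hM
  have hEq : ∀ a b, applyBlocks 1 E M (0, a) (0, b) = E P a b := by
    intro a b
    rfl
  refine posSemidef_iff_dotProduct_mulVec.mpr ⟨?_, ?_⟩
  · ext a b
    have := congrFun (congrFun key.1 (0, a)) (0, b)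
    simp only [conjTranspose_apply] at this ⊢
    rw [← hEq a b, ← this, hEq b a]
  · intro x
    have := key.dotProduct_mulVec_nonneg (fun p => x p.2)
    convert this using 1
    simp only [dotProduct, Matrix.mulVec, Fintype.sum_prod_type, Fin.sum_univ_one,
      Pi.star_apply]
    congr 1

/-- outer-product completeness for the eigenvector unitary -/
lemma qf_sum {d : ℕ} {ι : Type*} (s : Finset ι) (M : ι → Matrix (Fin d) (Fin d) ℂ)
    (y x : Fin d → ℂ) :
    y ⬝ᵥ ((∑ i ∈ s, M i) *ᵥ x) = ∑ i ∈ s, y ⬝ᵥ (M i *ᵥ x) := by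
  classical
  induction s using Finset.induction with
  | empty => simp [Matrix.zero_mulVec, dotProduct_zero]
  | insert _ _ h ih =>
      rw [Finset.sum_insert h, Finset.sum_insert h, Matrix.add_mulVec,
        dotProduct_add, ih]

lemma eig_complete {d : ℕ} {A : Matrix (Fin d) (Fin d) ℂ} (hA : A.IsHermitian) (a b : Fin d) :
    ∑ k, (hA.eigenvectorBasis k) a * star ((hA.eigenvectorBasis k) b)
      = (1 : Matrix (Fin d) (Fin d) ℂ) a b := by
  have hUU := (Matrix.mem_unitaryGroup_iff).mp (hA.eigenvectorUnitary).2
  have := congrFun (congrFun hUU a) b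
  simpa [Matrix.mul_apply, Matrix.star_apply, Matrix.IsHermitian.eigenvectorUnitary_apply]
    using this

/-- eigenvectors are normalized -/
lemma eig_norm {d : ℕ} {A : Matrix (Fin d) (Fin d) ℂ} (hA : A.IsHermitian) (j : Fin d) :
    star (⇑(hA.eigenvectorBasis j) : Fin d → ℂ) ⬝ᵥ ⇑(hA.eigenvectorBasis j) = 1 := by
  have h := orthonormal_iff_ite.mp (hA.eigenvectorBasis).orthonormal j j
  simp only [if_pos rfl] at h
  rw [EuclideanSpace.inner_eq_star_dotProduct] at h
  rw [dotProduct_comm]; simpa using h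

/-- a unital trace-preserving completely positive map never
    decreases the von Neumann entropy of a density matrix. -/
theorem stmt15 {d : ℕ}
    (E : Matrix (Fin d) (Fin d) ℂ →ₗ[ℂ] Matrix (Fin d) (Fin d) ℂ)
    (hCP : IsCP E) (hunital : E 1 = 1) (hTP : ∀ X, (E X).trace = X.trace)
    (ρ : Matrix (Fin d) (Fin d) ℂ) (hρ : ρ.PosSemidef) (hρ1 : ρ.trace = 1) :
    vnEntropy ρ ≤ vnEntropy (E ρ) := by
  classical
  have hσ : (E ρ).PosSemidef := cp_posSemidef hCP hρ
  have hρh : ρ.IsHermitian := hρ.1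
  have hσh : (E ρ).IsHermitian := hσ.1
  set lam : Fin d → ℝ := hρh.eigenvalues with hlam
  set v : Fin d → Fin d → ℂ := fun i => ⇑(hρh.eigenvectorBasis i) with hv
  set mu : Fin d → ℝ := hσh.eigenvalues with hmu
  set u : Fin d → Fin d → ℂ := fun j => ⇑(hσh.eigenvectorBasis j) with hu
  set P : Fin d → Matrix (Fin d) (Fin d) ℂ :=
    fun i => Matrix.of fun a b => v i a * star (v i b) with hPdef
  -- spectral decomposition of ρ
  have hρdecomp : ρ = ∑ i, (lam i : ℂ) • P i := by
    conv_lhs => rw [hρh.spectral_theorem, Unitary.conjStarAlgAut_apply]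
    ext a b
    simp only [Matrix.mul_apply, Matrix.mul_diagonal, Matrix.star_apply,
      Matrix.IsHermitian.eigenvectorUnitary_apply, Function.comp_apply,
      Matrix.sum_apply, Matrix.smul_apply, Matrix.of_apply, smul_eq_mul, hPdef, hv, hlam,
      Matrix.diagonal_apply]
    refine Finset.sum_congr rfl fun k _ => ?_
    simp only [mul_ite, mul_zero, Finset.sum_ite_eq', Finset.mem_univ, ite_true]
    rw [mul_right_comm, mul_comm]
    rfl
  -- completeness
  have hPsum : ∑ i, P i = (1 : Matrix (Fin d) (Fin d) ℂ) := by
    ext a b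
    simp only [Matrix.sum_apply, hPdef, Matrix.of_apply, hv]
    exact eig_complete hρh a b
  -- P i is PSD
  have hPpsd : ∀ i, (P i).PosSemidef := by
    intro i
    refine posSemidef_iff_dotProduct_mulVec.mpr ⟨?_, ?_⟩
    · ext a b
      simp only [conjTranspose_apply, hPdef, Matrix.of_apply, star_mul', star_star]
      ring
    · intro x
      have hs : star x ⬝ᵥ (P i *ᵥ x) =
          (∑ a, star (x a) * v i a) * ∑ b, star (v i b) * x b := by
        rw [Finset.sum_mul_sum]
        simp only [dotProduct, Matrix.mulVec, Pi.star_apply, hPdef, Matrix.of_apply,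
          Finset.mul_sum]
        exact Finset.sum_congr rfl fun a _ => Finset.sum_congr rfl fun b _ => by ring
      have hst : star (∑ a, star (x a) * v i a) = ∑ b, star (v i b) * x b := by
        simp only [star_sum, star_mul', star_star]
        exact Finset.sum_congr rfl fun b _ => by ring
      rw [hs, ← hst]
      exact mul_star_self_nonneg _
  -- the doubly stochastic kernel
  set c : Fin d → Fin d → ℂ := fun j i => star (u j) ⬝ᵥ (E (P i) *ᵥ u j) with hcdef
  have hc0 : ∀ j i, 0 ≤ c j i := fun j i => (cp_posSemidef hCP (hPpsd i)).dotProduct_mulVec_nonneg (u j)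
  set B : Fin d → Fin d → ℝ := fun j i => (c j i).re with hBdef
  have hcB : ∀ j i, c j i = ((B j i : ℝ) : ℂ) := by
    intro j i
    have h := (Complex.nonneg_iff).mp (hc0 j i)
    exact Complex.ext rfl h.2.symm
  have hB0 : ∀ j i, 0 ≤ B j i := fun j i => ((Complex.nonneg_iff).mp (hc0 j i)).1
  -- eigenvalue equation for σ = E ρ
  have hmulvec : ∀ j, E ρ *ᵥ u j = ((mu j : ℂ)) • u j := by
    intro j
    have := hσh.mulVec_eigenvectorBasis j
    rw [this]
    funext a
    simp [hu, hmu, Complex.real_smul]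
  have hquad1 : ∀ j, star (u j) ⬝ᵥ (E ρ *ᵥ u j) = (mu j : ℂ) := by
    intro j
    rw [hmulvec j, dotProduct_smul, eig_norm hσh j]
    simp [hu]
  have hEρdecomp : E ρ = ∑ i, (lam i : ℂ) • E (P i) := by
    conv_lhs => rw [hρdecomp]
    simp [map_sum, _root_.map_smul]
  have hquad2 : ∀ j, star (u j) ⬝ᵥ (E ρ *ᵥ u j) = ∑ i, (lam i : ℂ) * c j i := by
    intro j
    conv_lhs => rw [hEρdecomp]
    rw [qf_sum]
    refine Finset.sum_congr rfl fun i _ => ?_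
    rw [Matrix.smul_mulVec, dotProduct_smul, smul_eq_mul]
  have hμ : ∀ j, mu j = ∑ i, B j i * lam i := by
    intro j
    have h := (hquad1 j).symm.trans (hquad2 j)
    have : ((mu j : ℝ) : ℂ) = ((∑ i, B j i * lam i : ℝ) : ℂ) := by
      rw [h]
      push_cast
      exact Finset.sum_congr rfl fun i _ => by rw [hcB j i]; ring
    exact_mod_cast this
  -- row sums
  have hrow : ∀ j, ∑ i, B j i = 1 := by
    intro j
    have h : ∑ i, c j i = 1 := by
      have : ∑ i, c j i = star (u j) ⬝ᵥ ((E (∑ i, P i)) *ᵥ u j) := by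
        rw [map_sum, qf_sum]
      rw [this, hPsum, hunital, Matrix.one_mulVec, eig_norm hσh j]
    have : ((∑ i, B j i : ℝ) : ℂ) = ((1 : ℝ) : ℂ) := by
      push_cast
      rw [← h]
      exact Finset.sum_congr rfl fun i _ => (hcB j i).symm
    exact_mod_cast this
  -- trace identity
  have htr : ∀ (M : Matrix (Fin d) (Fin d) ℂ), ∑ j, star (u j) ⬝ᵥ (M *ᵥ u j) = M.trace := by
    intro M
    have step : ∀ j, star (u j) ⬝ᵥ (M *ᵥ u j) = ∑ a, ∑ b, M a b * (u j b * star (u j a)) := by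
      intro j
      simp only [dotProduct, Matrix.mulVec, Pi.star_apply, Finset.mul_sum]
      exact Finset.sum_congr rfl fun a _ => Finset.sum_congr rfl fun b _ => by ring
    calc ∑ j, star (u j) ⬝ᵥ (M *ᵥ u j)
        = ∑ j, ∑ a, ∑ b, M a b * (u j b * star (u j a)) := Finset.sum_congr rfl fun j _ => step j
      _ = ∑ a, ∑ b, M a b * ∑ j, u j b * star (u j a) := by
          rw [Finset.sum_comm]
          refine Finset.sum_congr rfl fun a _ => ?_
          rw [Finset.sum_comm]
          exact Finset.sum_congr rfl fun b _ => by rw [Finset.mul_sum]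
      _ = ∑ a, M a a := by
          refine Finset.sum_congr rfl fun a _ => ?_
          have : ∀ b, (∑ j, u j b * star (u j a)) = (1 : Matrix (Fin d) (Fin d) ℂ) b a :=
            fun b => eig_complete hσh b a
          simp only [this, Matrix.one_apply]
          simp [Finset.sum_ite_eq]
      _ = M.trace := rfl
  -- column sums
  have hcol : ∀ i, ∑ j, B j i = 1 := by
    intro i
    have htrP : (P i).trace = 1 := by
      have h1 : (P i).trace = ∑ a, v i a * star (v i a) := rfl
      have h2 : star (v i) ⬝ᵥ v i = 1 := eig_norm hρh i
      rw [h1, ← h2]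
      simp only [dotProduct, Pi.star_apply]
      exact Finset.sum_congr rfl fun a _ => by ring
    have h : ∑ j, c j i = 1 := by
      rw [show ∑ j, c j i = (E (P i)).trace from htr (E (P i)), hTP, htrP]
    have : ((∑ j, B j i : ℝ) : ℂ) = ((1 : ℝ) : ℂ) := by
      push_cast
      rw [← h]
      exact Finset.sum_congr rfl fun j _ => (hcB j i).symm
    exact_mod_cast this
  -- entropy formulas
  have hSρ : vnEntropy ρ = ∑ i, Real.negMulLog (lam i) := by
    simp only [vnEntropy, dif_pos hρh, Real.negMulLog, neg_mul, ← Finset.sum_neg_distrib]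
    rfl
  have hSσ : vnEntropy (E ρ) = ∑ j, Real.negMulLog (mu j) := by
    simp only [vnEntropy, dif_pos hσh, Real.negMulLog, neg_mul, ← Finset.sum_neg_distrib]
    rfl
  -- Jensen per row
  have jensen : ∀ j, ∑ i, B j i * Real.negMulLog (lam i)
      ≤ Real.negMulLog (∑ i, B j i * lam i) := by
    intro j
    have := Real.concaveOn_negMulLog.le_map_sum (t := Finset.univ)
      (fun i _ => hB0 j i) (hrow j) (fun i _ => hρ.eigenvalues_nonneg i)
    simpa [smul_eq_mul] using this
  calc vnEntropy ρ = ∑ i, Real.negMulLog (lam i) := hSρ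
    _ = ∑ i, (∑ j, B j i) * Real.negMulLog (lam i) := by
        refine Finset.sum_congr rfl fun i _ => ?_
        rw [hcol i, one_mul]
    _ = ∑ j, ∑ i, B j i * Real.negMulLog (lam i) := by
        rw [Finset.sum_comm]
        exact Finset.sum_congr rfl fun i _ => by rw [Finset.sum_mul]
    _ ≤ ∑ j, Real.negMulLog (∑ i, B j i * lam i) := Finset.sum_le_sum fun j _ => jensen j
    _ = ∑ j, Real.negMulLog (mu j) := by
        exact Finset.sum_congr rfl fun j _ => by rw [← hμ j]
    _ = vnEntropy (E ρ) := hSσ.symm
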